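/- For every τ > 0, the limit as y → -∞ of e^{τ - y} · erfc((2τ - y)/(2√τ)) equals 0. -/

import Mathlib

open Real Filter Topology MeasureTheory Set

/-- The Gauss error function `erf x = (2/√π) ∫₀^x e^{-t²} dt`. -/
noncomputable def erf (x : ℝ) : ℝ := (2 / Real.sqrt π) * ∫ t in (0:ℝ)..x, Real.exp (-t ^ 2)

/-- The complementary error function `erfc x = 1 - erf x`. -/
noncomputable def erfc (x : ℝ) : ℝ := 1 - erf x

lemma integral_mul_exp_Ioi (x : ℝ) :
    ∫ t in Ioi x, t * Real.exp (-t ^ 2) = Real.exp (-x ^ 2) / 2 := by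
  have h : ∀ t ∈ Ioi x, HasDerivAt (fun t : ℝ => -Real.exp (-t ^ 2) / 2)
      (t * Real.exp (-t ^ 2)) t := by
    intro t _
    have : HasDerivAt (fun t : ℝ => Real.exp (-t ^ 2)) (Real.exp (-t ^ 2) * (-(2 * t))) t := by
      have h1 : HasDerivAt (fun t : ℝ => -t ^ 2) (-(2 * t)) t := by
        simpa using ((hasDerivAt_pow 2 t).fun_neg)
      exact (Real.hasDerivAt_exp _).comp t h1
    rw [show t * Real.exp (-t ^ 2) = -(Real.exp (-t ^ 2) * -(2 * t)) / 2 by ring]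
    exact this.fun_neg.div_const 2
  have hint : IntegrableOn (fun t : ℝ => t * Real.exp (-t ^ 2)) (Ioi x) := by
    have := integrable_mul_exp_neg_mul_sq (b := 1) one_pos
    simpa using this.integrableOn
  have hcont : ContinuousWithinAt (fun t : ℝ => -Real.exp (-t ^ 2) / 2) (Ici x) x := by
    exact (Continuous.continuousWithinAt (by continuity))
  have htend : Tendsto (fun t : ℝ => -Real.exp (-t ^ 2) / 2) atTop (𝓝 0) := by
    have : Tendsto (fun t : ℝ => -t ^ 2) atTop atBot := by
      simpa using (tendsto_pow_atTop (two_ne_zero)).neg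
    have := (Real.tendsto_exp_atBot.comp this).neg.div_const 2
    simpa using this
  have := MeasureTheory.integral_Ioi_of_hasDerivAt_of_tendsto hcont h hint htend
  rw [this]; ring

lemma integral_exp_Ioi_le {x : ℝ} (hx : 0 < x) :
    ∫ t in Ioi x, Real.exp (-t ^ 2) ≤ Real.exp (-x ^ 2) / (2 * x) := by
  have hmono : ∫ t in Ioi x, Real.exp (-t ^ 2) ≤ ∫ t in Ioi x, (t / x) * Real.exp (-t ^ 2) := by
    apply setIntegral_mono_on
    · have := integrable_exp_neg_mul_sq (b := 1) one_pos
      simpa using this.integrableOn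
    · have := integrable_mul_exp_neg_mul_sq (b := 1) one_pos
      have h := (this.integrableOn (s := Ioi x)).div_const x
      simpa [mul_div_assoc, div_mul_eq_mul_div, IntegrableOn] using h
    · exact measurableSet_Ioi
    · intro t ht
      have h1 : 1 ≤ t / x := (one_le_div hx).2 (le_of_lt ht)
      nlinarith [Real.exp_pos (-t ^ 2)]
  calc ∫ t in Ioi x, Real.exp (-t ^ 2) ≤ ∫ t in Ioi x, (t / x) * Real.exp (-t ^ 2) := hmono
    _ = (1 / x) * ∫ t in Ioi x, t * Real.exp (-t ^ 2) := by
        rw [← integral_const_mul]; congr 1; ext t; ring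
    _ = Real.exp (-x ^ 2) / (2 * x) := by rw [integral_mul_exp_Ioi]; field_simp

lemma erfc_eq {x : ℝ} (hx : 0 ≤ x) :
    erfc x = (2 / Real.sqrt π) * ∫ t in Ioi x, Real.exp (-t ^ 2) := by
  have hIoi0 : ∫ t in Ioi (0 : ℝ), Real.exp (-t ^ 2) = Real.sqrt π / 2 := by
    have := integral_gaussian_Ioi 1
    simpa using this
  have hsplit : (∫ t in Ioc (0 : ℝ) x, Real.exp (-t ^ 2)) + ∫ t in Ioi x, Real.exp (-t ^ 2)
      = Real.sqrt π / 2 := by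
    rw [← hIoi0, ← setIntegral_union (Ioc_disjoint_Ioi le_rfl) measurableSet_Ioi]
    · rw [Ioc_union_Ioi_eq_Ioi hx]
    · exact ((integrable_exp_neg_mul_sq (b := 1) one_pos).integrableOn).congr_fun
        (by intro t _; norm_num) measurableSet_Ioc
    · exact ((integrable_exp_neg_mul_sq (b := 1) one_pos).integrableOn).congr_fun
        (by intro t _; norm_num) measurableSet_Ioi
  have hπ : (0 : ℝ) < Real.sqrt π := Real.sqrt_pos.2 Real.pi_pos
  have hiv : ∫ t in (0:ℝ)..x, Real.exp (-t ^ 2) = ∫ t in Ioc (0 : ℝ) x, Real.exp (-t ^ 2) := by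
    rw [intervalIntegral.integral_of_le hx]
  unfold erfc erf
  rw [hiv]
  field_simp
  linarith [hsplit]

lemma erfc_nonneg {x : ℝ} (hx : 0 ≤ x) : 0 ≤ erfc x := by
  rw [erfc_eq hx]
  have hπ : (0 : ℝ) < Real.sqrt π := Real.sqrt_pos.2 Real.pi_pos
  apply mul_nonneg (by positivity)
  apply setIntegral_nonneg measurableSet_Ioi
  intro t _; positivity

lemma erfc_le {x : ℝ} (hx : 0 < x) :
    erfc x ≤ Real.exp (-x ^ 2) / (x * Real.sqrt π) := by
  rw [erfc_eq hx.le]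
  have hπ : (0 : ℝ) < Real.sqrt π := Real.sqrt_pos.2 Real.pi_pos
  have := integral_exp_Ioi_le hx
  calc (2 / Real.sqrt π) * ∫ t in Ioi x, Real.exp (-t ^ 2)
      ≤ (2 / Real.sqrt π) * (Real.exp (-x ^ 2) / (2 * x)) := by
        apply mul_le_mul_of_nonneg_left this (by positivity)
    _ = Real.exp (-x ^ 2) / (x * Real.sqrt π) := by field_simp

theorem exp_mul_erfc_tendsto_zero (τ : ℝ) (hτ : 0 < τ) :
    Tendsto (fun y : ℝ => Real.exp (τ - y) * erfc ((2 * τ - y) / (2 * Real.sqrt τ)))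
      atBot (𝓝 0) := by
  have hsτ : (0 : ℝ) < Real.sqrt τ := Real.sqrt_pos.2 hτ
  have hsq : Real.sqrt τ ^ 2 = τ := Real.sq_sqrt hτ.le
  have hπ : (0 : ℝ) < Real.sqrt π := Real.sqrt_pos.2 Real.pi_pos
  -- the dominating function
  have hg : Tendsto (fun y : ℝ => Real.exp (-y ^ 2 / (4 * τ)) / (Real.sqrt τ * Real.sqrt π))
      atBot (𝓝 0) := by
    have hsq2 : Tendsto (fun y : ℝ => y ^ 2) atBot atTop := by
      have := (tendsto_pow_atTop (n := 2) (by norm_num)).comp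
        (tendsto_abs_atBot_atTop (G := ℝ))
      simpa only [Function.comp_def, sq_abs] using this
    have hneg : Tendsto (fun y : ℝ => -y ^ 2) atBot atBot := by
      simpa [Function.comp_def] using tendsto_neg_atTop_atBot.comp hsq2
    have h4τ : (0:ℝ) < 4 * τ := by positivity
    have h1 : Tendsto (fun y : ℝ => -y ^ 2 / (4 * τ)) atBot atBot :=
      hneg.atBot_div_const h4τ
    have h2 := (Real.tendsto_exp_atBot.comp h1).div_const (Real.sqrt τ * Real.sqrt π)
    simpa [Function.comp] using h2
  apply squeeze_zero' (g := fun y : ℝ => Real.exp (-y ^ 2 / (4 * τ)) / (Real.sqrt τ * Real.sqrt π))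
    _ _ hg
  · filter_upwards [eventually_le_atBot (0 : ℝ)] with y hy
    have hx : (0:ℝ) ≤ (2 * τ - y) / (2 * Real.sqrt τ) := by
      apply div_nonneg (by linarith) (by positivity)
    exact mul_nonneg (Real.exp_pos _).le (erfc_nonneg hx)
  · filter_upwards [eventually_le_atBot (0 : ℝ)] with y hy
    set x := (2 * τ - y) / (2 * Real.sqrt τ) with hxdef
    have hxpos : 0 < x := by
      apply div_pos (by linarith) (by positivity)
    have hxge : Real.sqrt τ ≤ x := by
      rw [hxdef, le_div_iff₀ (by positivity)]
      nlinarith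
    have hx2 : x ^ 2 = (2 * τ - y) ^ 2 / (4 * τ) := by
      rw [hxdef, div_pow]
      congr 1
      nlinarith
    have hkey : τ - y - x ^ 2 = -y ^ 2 / (4 * τ) := by
      rw [hx2]; field_simp; ring
    calc Real.exp (τ - y) * erfc x
        ≤ Real.exp (τ - y) * (Real.exp (-x ^ 2) / (x * Real.sqrt π)) := by
          exact mul_le_mul_of_nonneg_left (erfc_le hxpos) (Real.exp_pos _).le
      _ = Real.exp (τ - y - x ^ 2) / (x * Real.sqrt π) := by
          rw [show τ - y - x ^ 2 = (τ - y) + (-x ^ 2) by ring, Real.exp_add]; ring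
      _ ≤ Real.exp (-y ^ 2 / (4 * τ)) / (Real.sqrt τ * Real.sqrt π) := by
          rw [hkey]
          apply div_le_div_of_nonneg_left (Real.exp_pos _).le (by positivity)
          exact mul_le_mul_of_nonneg_right hxge hπ.le
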